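/- The Euclidean projection of a vector y onto the capped simplex {f ∈ [0,1]^N : Σ f_i = C}, when y satisfies 0 ≤ y_i ≤ 1 for all i, Σ y_i = C + η for some η > 0, and the resulting uniformly-reduced values stay in [0,1], is given by subtracting ρ = η/|M_p| from every strictly positive component of y, where M_p = {i : y_i > 0}; formally, if y_i − ρ ≥ 0 for all i ∈ M_p and y_i − ρ ≤ 1 for all i ∈ M_p, then f with f_i = y_i − ρ for i ∈ M_p and f_i = 0 otherwise is the unique minimizer of ½‖f − y‖² over the capped simplex. -/

import Mathlib

open Finset

/-- Uniform-excess formula for the Euclidean projection onto the capped simplex: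
if `0 ≤ y_i ≤ 1`, `∑ y_i = C + η` with `η > 0`, and subtracting `ρ = η/|M_p|` from
each strictly positive component keeps all values in `[0,1]`, then the vector `f`
with `f_i = y_i - ρ` on `M_p = {i : y_i > 0}` and `0` elsewhere is the unique
minimizer of `½‖f - y‖²` over the capped simplex. -/
theorem capped_simplex_projection_uniform_excess (N C : ℕ) (hC : 0 < C) (hCN : C < N)
    (y : EuclideanSpace ℝ (Fin N)) (η : ℝ) (hη : 0 < η)
    (hy0 : ∀ i, 0 ≤ y i) (hy1 : ∀ i, y i ≤ 1)
    (hysum : ∑ i, y i = (C : ℝ) + η)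
    (Mp : Finset (Fin N)) (hMp : ∀ i, i ∈ Mp ↔ 0 < y i)
    (ρ : ℝ) (hρ : ρ = η / Mp.card)
    (hlow : ∀ i ∈ Mp, 0 ≤ y i - ρ) (hhigh : ∀ i ∈ Mp, y i - ρ ≤ 1)
    (f : EuclideanSpace ℝ (Fin N))
    (hf : ∀ i, f i = if i ∈ Mp then y i - ρ else 0)
    (F : Set (EuclideanSpace ℝ (Fin N)))
    (hF : F = {g : EuclideanSpace ℝ (Fin N) |
      (∀ i, 0 ≤ g i ∧ g i ≤ 1) ∧ ∑ i, g i = (C : ℝ)}) :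
    f ∈ F ∧ (∀ g ∈ F, (1 / 2) * ‖f - y‖ ^ 2 ≤ (1 / 2) * ‖g - y‖ ^ 2) ∧
      (∀ g ∈ F, g ≠ f → (1 / 2) * ‖f - y‖ ^ 2 < (1 / 2) * ‖g - y‖ ^ 2) := by
  have normsq : ∀ v : EuclideanSpace ℝ (Fin N), ‖v‖ ^ 2 = ∑ i, (v i) ^ 2 := by
    intro v
    rw [EuclideanSpace.norm_eq]
    rw [Real.sq_sqrt (Finset.sum_nonneg fun i _ => sq_nonneg _)]
    exact Finset.sum_congr rfl fun i _ => by rw [Real.norm_eq_abs, sq_abs]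
  have h0 : ∀ i, i ∉ Mp → y i = 0 := by
    intro i hi
    by_contra h
    exact hi ((hMp i).mpr (lt_of_le_of_ne (hy0 i) (Ne.symm h)))
  have hCpos : (0:ℝ) < C := by exact_mod_cast hC
  have hMpne : Mp.Nonempty := by
    by_contra h
    have h' : ∀ i, y i = 0 := fun i =>
      h0 i (by simp [Finset.not_nonempty_iff_eq_empty.mp h])
    have : (0:ℝ) = (C:ℝ) + η := by rw [← hysum]; simp [h']
    linarith
  have hcard : (0:ℝ) < Mp.card := by exact_mod_cast Finset.card_pos.mpr hMpne
  have hρ0 : 0 < ρ := by rw [hρ]; positivity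
  have hsumyMp : ∑ i ∈ Mp, y i = (C:ℝ) + η := by
    rw [← hysum]
    exact Finset.sum_subset (Finset.subset_univ _) (fun i _ hi => h0 i hi)
  have hf0 : ∀ i, i ∉ Mp → f i = 0 := fun i hi => by simp [hf i, hi]
  have hsumf : ∑ i, f i = (C:ℝ) := by
    have : ∑ i, f i = ∑ i ∈ Mp, (y i - ρ) := by
      simp only [hf]
      rw [Finset.sum_ite_mem, Finset.univ_inter]
    rw [this, Finset.sum_sub_distrib, hsumyMp, Finset.sum_const, nsmul_eq_mul, hρ]
    field_simp
    ring
  have hsumfMp : ∑ i ∈ Mp, f i = (C:ℝ) := by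
    rw [← hsumf]
    exact Finset.sum_subset (Finset.subset_univ _) (fun i _ hi => hf0 i hi)
  have hfF : f ∈ F := by
    rw [hF]
    refine ⟨fun i => ?_, hsumf⟩
    by_cases hi : i ∈ Mp
    · simp only [hf i, hi, if_true]
      exact ⟨hlow i hi, hhigh i hi⟩
    · simp [hf i, hi]
  have hfy : ∀ i, f i - y i = if i ∈ Mp then -ρ else 0 := by
    intro i
    by_cases hi : i ∈ Mp
    · simp [hf i, hi]
    · simp [hf i, hi, h0 i hi]
  have key : ∀ g ∈ F, ∑ i, (f i - y i)^2 + ∑ i, (g i - f i)^2 ≤ ∑ i, (g i - y i)^2 := by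
    intro g hg
    rw [hF] at hg
    obtain ⟨hg01, hgsum⟩ := hg
    have hgle : ∑ i ∈ Mp, g i ≤ (C:ℝ) := by
      rw [← hgsum]
      exact Finset.sum_le_sum_of_subset_of_nonneg (Finset.subset_univ _)
        (fun i _ _ => (hg01 i).1)
    have cross : 0 ≤ ∑ i, (g i - f i) * (f i - y i) := by
      have hpt : ∀ i, (g i - f i) * (f i - y i) =
          if i ∈ Mp then (g i - f i) * (-ρ) else 0 := by
        intro i
        rw [hfy i]
        by_cases hi : i ∈ Mp <;> simp [hi]
      have : ∑ i, (g i - f i) * (f i - y i) = ρ * ((C:ℝ) - ∑ i ∈ Mp, g i) := by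
        rw [Finset.sum_congr rfl (fun i _ => hpt i), Finset.sum_ite_mem,
          Finset.univ_inter]
        have : ∑ i ∈ Mp, (g i - f i) * (-ρ) =
            (∑ i ∈ Mp, g i - ∑ i ∈ Mp, f i) * (-ρ) := by
          rw [← Finset.sum_mul, Finset.sum_sub_distrib]
        rw [this, hsumfMp]
        ring
      rw [this]
      have := hgle
      nlinarith
    have expand : ∑ i, (g i - y i)^2 =
        ∑ i, (g i - f i)^2 + 2 * ∑ i, ((g i - f i) * (f i - y i)) + ∑ i, (f i - y i)^2 := by
      have hpt : ∀ i, (g i - y i)^2 =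
          (g i - f i)^2 + 2 * ((g i - f i) * (f i - y i)) + (f i - y i)^2 :=
        fun i => by ring
      rw [Finset.sum_congr rfl (fun i _ => hpt i)]
      rw [Finset.sum_add_distrib, Finset.sum_add_distrib, Finset.mul_sum]
    linarith
  have hsub : ∀ (u v : EuclideanSpace ℝ (Fin N)) (i : Fin N), (u - v) i = u i - v i :=
    fun u v i => rfl
  refine ⟨hfF, ?_, ?_⟩
  · intro g hg
    have hk := key g hg
    have h1 : ‖f - y‖ ^ 2 = ∑ i, (f i - y i)^2 := by
      rw [normsq]; exact Finset.sum_congr rfl fun i _ => by rw [hsub]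
    have h2 : ‖g - y‖ ^ 2 = ∑ i, (g i - y i)^2 := by
      rw [normsq]; exact Finset.sum_congr rfl fun i _ => by rw [hsub]
    have hnn : 0 ≤ ∑ i, (g i - f i)^2 := Finset.sum_nonneg fun i _ => sq_nonneg _
    rw [h1, h2]
    linarith
  · intro g hg hne
    have hk := key g hg
    have h1 : ‖f - y‖ ^ 2 = ∑ i, (f i - y i)^2 := by
      rw [normsq]; exact Finset.sum_congr rfl fun i _ => by rw [hsub]
    have h2 : ‖g - y‖ ^ 2 = ∑ i, (g i - y i)^2 := by
      rw [normsq]; exact Finset.sum_congr rfl fun i _ => by rw [hsub]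
    have hex : ∃ i, g i ≠ f i := by
      by_contra h
      push_neg at h
      exact hne (PiLp.ext h)
    obtain ⟨i, hi⟩ := hex
    have hpos : 0 < ∑ j, (g j - f j)^2 :=
      Finset.sum_pos' (fun j _ => sq_nonneg _)
        ⟨i, Finset.mem_univ i, by
          have : g i - f i ≠ 0 := sub_ne_zero.mpr hi
          positivity⟩
    rw [h1, h2]
    linarith
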